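/- Let G be a finite group. The prime-coprime graph Θ(G) is a split graph if and only if one of the following holds: (i) every element of G has order 1 or prime order; or (ii) there exists a fixed prime p such that every element of G not of order 1 or prime order has order p^k for some k ≥ 2; or (iii) there exist fixed distinct primes p and q such that every element of G not of order 1 or prime order has order pq. -/

import Mathlib

/-- The prime-coprime graph: distinct vertices `g, h` are adjacent iff
`gcd (orderOf g) (orderOf h)` is `1` or a prime. -/
def primeCoprimeGraph (G : Type*) [Monoid G] : SimpleGraph G where
  Adj g h := g ≠ h ∧
    (Nat.gcd (orderOf g) (orderOf h) = 1 ∨ (Nat.gcd (orderOf g) (orderOf h)).Prime)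
  symm := by
    constructor
    rintro g h ⟨hne, hd⟩
    exact ⟨hne.symm, by rwa [Nat.gcd_comm]⟩
  loopless := by constructor; rintro g ⟨hne, -⟩; exact hne rfl

/-- A set of vertices is independent if no two of its elements are adjacent. -/
def IsIndepSet {V : Type*} (Γ : SimpleGraph V) (s : Set V) : Prop :=
  s.Pairwise fun a b => ¬ Γ.Adj a b

open scoped Classical in
/-- The independence number of a graph on a finite vertex set. -/
noncomputable def indepNum {V : Type*} [Fintype V] (Γ : SimpleGraph V) : ℕ :=
  Finset.univ.sup fun s : Finset V => if IsIndepSet Γ (s : Set V) then s.card else 0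

/-- A graph is split if its vertex set can be partitioned into two disjoint nonempty
subsets, one a clique and the other an independent set. -/
def IsSplit {V : Type*} (Γ : SimpleGraph V) : Prop :=
  ∃ K I : Set V, K.Nonempty ∧ I.Nonempty ∧ Disjoint K I ∧ K ∪ I = Set.univ ∧
    Γ.IsClique K ∧ IsIndepSet Γ I

/-- A number divisible by the square of a prime is neither `1` nor prime. -/
lemma notOP_of_sq_dvd {p d : ℕ} (hp : p.Prime) (h : p ^ 2 ∣ d) :
    ¬(d = 1 ∨ d.Prime) := by
  rintro (rfl | hd)
  · have h1 : p ^ 2 = 1 := Nat.dvd_one.mp h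
    nlinarith [hp.two_le]
  · have hpd : p ∣ d := dvd_trans (dvd_pow_self p (by norm_num)) h
    have : p = d := (Nat.prime_dvd_prime_iff_eq hp hd).mp hpd
    subst this
    have hle : p ^ 2 ≤ p := Nat.le_of_dvd hp.pos h
    nlinarith [hp.two_le]

/-- A product of two distinct primes is neither `1` nor prime. -/
lemma notOP_mul {p q : ℕ} (hp : p.Prime) (hq : q.Prime) (hne : p ≠ q) :
    ¬(p * q = 1 ∨ (p * q).Prime) := by
  rintro (h1 | hpr)
  · exact hp.one_lt.ne' (Nat.eq_one_of_mul_eq_one_right h1)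
  · have : p = p * q := (Nat.prime_dvd_prime_iff_eq hp hpr).mp (dvd_mul_right p q)
    nlinarith [hp.two_le, hq.two_le]

/-- A composite divisor of `p ^ 2` is `p ^ 2`. -/
lemma eq_sq_of_dvd {p d : ℕ} (hp : p.Prime) (hd : d ∣ p ^ 2)
    (hc : ¬(d = 1 ∨ d.Prime)) : d = p ^ 2 := by
  obtain ⟨i, hi, rfl⟩ := (Nat.dvd_prime_pow hp).mp hd
  interval_cases i
  · exact absurd (Or.inl (pow_zero p)) hc
  · exact absurd (Or.inr (by simpa using hp)) hc
  · rfl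

/-- A composite divisor of `p * q` (for distinct primes `p, q`) is `p * q`. -/
lemma eq_mul_of_dvd {p q d : ℕ} (hp : p.Prime) (hq : q.Prime) (hne : p ≠ q)
    (hd : d ∣ p * q) (hc : ¬(d = 1 ∨ d.Prime)) : d = p * q := by
  have hd1 : d ≠ 1 := fun h => hc (Or.inl h)
  have hr : d.minFac.Prime := Nat.minFac_prime hd1
  have hrd : d.minFac ∣ d := Nat.minFac_dvd d
  have hrpq : d.minFac ∣ p * q := hrd.trans hd
  rcases (Nat.Prime.dvd_mul hr).mp hrpq with h | h
  · have hrp : d.minFac = p := (Nat.prime_dvd_prime_iff_eq hr hp).mp h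
    rw [hrp] at hrd
    obtain ⟨e, rfl⟩ := hrd
    have he : e ∣ q := (mul_dvd_mul_iff_left hp.pos.ne').mp hd
    rcases (Nat.Prime.eq_one_or_self_of_dvd hq e he) with he1 | he1
    · exact absurd (Or.inr (show (p * e).Prime by rw [he1, mul_one]; exact hp)) hc
    · rw [he1]
  · have hrq : d.minFac = q := (Nat.prime_dvd_prime_iff_eq hr hq).mp h
    rw [hrq] at hrd
    obtain ⟨e, rfl⟩ := hrd
    have he : e ∣ p := (mul_dvd_mul_iff_left hq.pos.ne').mp (by rwa [mul_comm p q] at hd)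
    rcases (Nat.Prime.eq_one_or_self_of_dvd hp e he) with he1 | he1
    · exact absurd (Or.inr (show (q * e).Prime by rw [he1, mul_one]; exact hq)) hc
    · rw [he1]; exact mul_comm q p

/-- A vertex of order `1` or prime order is adjacent to every other vertex. -/
lemma adj_aux {G : Type*} [Monoid G] {g h : G} (hne : g ≠ h)
    (hg : orderOf g = 1 ∨ (orderOf g).Prime) : (primeCoprimeGraph G).Adj g h := by
  refine ⟨hne, ?_⟩
  rcases hg with h1 | hp
  · left; rw [h1]; exact Nat.gcd_one_left _
  · rcases hp.eq_one_or_self_of_dvd _ (Nat.gcd_dvd_left _ _) with he | he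
    · exact Or.inl he
    · exact Or.inr (by rw [he]; exact hp)

/-- If the set of composite-order elements is independent, the graph is split. -/
lemma isSplit_aux {G : Type*} [Group G] [Fintype G] [Nontrivial G]
    (hind : IsIndepSet (primeCoprimeGraph G)
      {g : G | ¬(orderOf g = 1 ∨ (orderOf g).Prime)}) :
    IsSplit (primeCoprimeGraph G) := by
  by_cases hS : ({g : G | ¬(orderOf g = 1 ∨ (orderOf g).Prime)} : Set G).Nonempty
  · refine ⟨_, _, ⟨1, ?_⟩, hS, disjoint_compl_left, Set.compl_union_self _, ?_, hind⟩
    · simp [Set.mem_compl_iff, Set.mem_setOf_eq]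
    · exact (SimpleGraph.isClique_iff _).mpr fun a ha b hb hne =>
        adj_aux hne (not_not.mp ha)
  · rw [Set.not_nonempty_iff_eq_empty] at hS
    have hall : ∀ g : G, orderOf g = 1 ∨ (orderOf g).Prime := fun g =>
      not_not.mp (by
        intro hg
        exact absurd (hS ▸ hg : g ∈ (∅ : Set G)) (Set.notMem_empty g))
    obtain ⟨a, ha⟩ := exists_ne (1 : G)
    refine ⟨{a}ᶜ, {a}, ⟨1, fun h => ha (Set.mem_singleton_iff.mp h).symm⟩, ⟨a, rfl⟩,
      disjoint_compl_left, Set.compl_union_self _, ?_, Set.pairwise_singleton a _⟩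
    exact (SimpleGraph.isClique_iff _).mpr fun x _ y _ hne => adj_aux hne (hall x)

theorem split_iff (G : Type*) [Group G] [Fintype G] [Nontrivial G] :
    IsSplit (primeCoprimeGraph G) ↔
      ((∀ g : G, orderOf g = 1 ∨ (orderOf g).Prime) ∨
        (∃ p : ℕ, p.Prime ∧ ∀ g : G, ¬(orderOf g = 1 ∨ (orderOf g).Prime) →
          ∃ k : ℕ, 2 ≤ k ∧ orderOf g = p ^ k) ∨
        (∃ p q : ℕ, p.Prime ∧ q.Prime ∧ p ≠ q ∧
          ∀ g : G, ¬(orderOf g = 1 ∨ (orderOf g).Prime) → orderOf g = p * q)) := by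
  constructor
  · rintro ⟨K, I, -, -, -, hcover, hclique, hindep⟩
    by_cases hall : ∀ g : G, orderOf g = 1 ∨ (orderOf g).Prime
    · exact Or.inl hall
    right
    obtain ⟨g₀, hg₀⟩ := not_forall.mp hall
    -- every vertex is in K or I
    have hKI : ∀ x : G, x ∈ K ∨ x ∈ I := fun x => by
      have : x ∈ K ∪ I := hcover ▸ Set.mem_univ x
      exact this
    -- key step: any two composite-order elements have composite order-gcd
    have key : ∀ g h : G, ¬(orderOf g = 1 ∨ (orderOf g).Prime) →
        ¬(orderOf h = 1 ∨ (orderOf h).Prime) →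
        ¬(Nat.gcd (orderOf g) (orderOf h) = 1 ∨
          (Nat.gcd (orderOf g) (orderOf h)).Prime) := by
      intro g h hg hh hcon
      have mem : ∀ x : G, ¬(orderOf x = 1 ∨ (orderOf x).Prime) →
          ∃ x' ∈ I, orderOf x' = orderOf x := by
        intro x hx
        have hxinv : x ≠ x⁻¹ := by
          intro hxe
          have hx2 : x ^ 2 = 1 := by
            rw [pow_two]; nth_rewrite 2 [hxe]; exact mul_inv_cancel x
          have hdvd : orderOf x ∣ 2 := orderOf_dvd_of_pow_eq_one hx2
          rcases (Nat.prime_two.eq_one_or_self_of_dvd _ hdvd) with h1 | h2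
          · exact hx (Or.inl h1)
          · exact hx (Or.inr (h2 ▸ Nat.prime_two))
        have hnadj : ¬ (primeCoprimeGraph G).Adj x x⁻¹ := by
          rintro ⟨-, hor⟩
          rw [orderOf_inv, Nat.gcd_self] at hor
          exact hx hor
        rcases hKI x with hxK | hxI
        · rcases hKI x⁻¹ with hxK' | hxI'
          · exact absurd (hclique hxK hxK' hxinv) hnadj
          · exact ⟨x⁻¹, hxI', orderOf_inv x⟩
        · exact ⟨x, hxI, rfl⟩
      obtain ⟨g', hg'I, hg'o⟩ := mem g hg
      obtain ⟨h', hh'I, hh'o⟩ := mem h hh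
      have hne : g' ≠ h' := by
        intro he
        rw [he, hh'o] at hg'o
        rw [← hg'o, Nat.gcd_self] at hcon
        exact hh hcon
      exact hindep hg'I hh'I hne ⟨hne, by rw [hg'o, hh'o]; exact hcon⟩
    have exo : ∀ (g : G) (d : ℕ), d ∣ orderOf g → ∃ h : G, orderOf h = d :=
      fun g d hd => ⟨g ^ (orderOf g / d), orderOf_pow_orderOf_div (orderOf_pos g).ne' hd⟩
    have keyn : ∀ m n : ℕ, (∃ g : G, orderOf g = m) → (∃ h : G, orderOf h = n) →
        ¬(m = 1 ∨ m.Prime) → ¬(n = 1 ∨ n.Prime) →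
        ¬(Nat.gcd m n = 1 ∨ (Nat.gcd m n).Prime) := by
      rintro m n ⟨g, rfl⟩ ⟨h, rfl⟩ hm hn
      exact key g h hm hn
    set n₀ := orderOf g₀ with hn₀def
    have hn₀0 : n₀ ≠ 0 := (orderOf_pos g₀).ne'
    have hn₀1 : n₀ ≠ 1 := fun h => hg₀ (Or.inl h)
    set p := n₀.minFac with hpdef
    have hp : p.Prime := Nat.minFac_prime hn₀1
    have hpn : p ∣ n₀ := Nat.minFac_dvd n₀
    set m := n₀ / p with hmdef
    have hmn : n₀ = p * m := (Nat.mul_div_cancel' hpn).symm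
    have hm1 : m ≠ 1 := by
      intro h1
      rw [h1, mul_one] at hmn
      exact hg₀ (Or.inr (hmn ▸ hp))
    have hm0 : m ≠ 0 := by
      intro h0; rw [h0, mul_zero] at hmn; exact hn₀0 hmn
    set q := m.minFac with hqdef
    have hq : q.Prime := Nat.minFac_prime hm1
    have hqm : q ∣ m := Nat.minFac_dvd m
    by_cases hpq : q = p
    · -- p ^ 2 divides n₀ : prime-power case
      left
      have hp2n : p ^ 2 ∣ n₀ := by
        rw [hmn, pow_two]
        exact mul_dvd_mul_left p (hpq ▸ hqm)
      have hep2 : ∃ h : G, orderOf h = p ^ 2 := exo g₀ _ hp2n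
      refine ⟨p, hp, fun g hg => ?_⟩
      have hcp2 : ¬(p ^ 2 = 1 ∨ (p ^ 2).Prime) := notOP_of_sq_dvd hp dvd_rfl
      have h1 := keyn (orderOf g) (p ^ 2) ⟨g, rfl⟩ hep2 hg hcp2
      have hgcd : Nat.gcd (orderOf g) (p ^ 2) = p ^ 2 :=
        eq_sq_of_dvd hp (Nat.gcd_dvd_right _ _) h1
      have hp2g : p ^ 2 ∣ orderOf g := hgcd ▸ Nat.gcd_dvd_left _ _
      have hpg : p ∣ orderOf g := dvd_trans (dvd_pow_self p (by norm_num)) hp2g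
      have hr : ∀ {r : ℕ}, r.Prime → r ∣ orderOf g → r = p := by
        intro r hrp hrg
        by_contra hrne
        have hcop : Nat.Coprime p r := (Nat.coprime_primes hp hrp).mpr (Ne.symm hrne)
        have hprg : p * r ∣ orderOf g := hcop.mul_dvd_of_dvd_of_dvd hpg hrg
        have hepr : ∃ h : G, orderOf h = p * r := exo g _ hprg
        have hcpr : ¬(p * r = 1 ∨ (p * r).Prime) := notOP_mul hp hrp (Ne.symm hrne)
        have h2 := keyn (p * r) (p ^ 2) hepr hep2 hcpr hcp2
        have : Nat.gcd (p * r) (p ^ 2) = p := by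
          rw [pow_two, Nat.gcd_mul_left, (Nat.coprime_primes hrp hp).mpr hrne, mul_one]
        rw [this] at h2
        exact h2 (Or.inr hp)
      have hg0 : orderOf g ≠ 0 := (orderOf_pos g).ne'
      have hgp : orderOf g = p ^ (orderOf g).primeFactorsList.length :=
        Nat.eq_prime_pow_of_unique_prime_dvd hg0 hr
      refine ⟨(orderOf g).primeFactorsList.length, ?_, hgp⟩
      by_contra hk
      push_neg at hk
      rcases Nat.le_one_iff_eq_zero_or_eq_one.mp (Nat.lt_succ_iff.mp hk) with h0 | h1
      · rw [h0, pow_zero] at hgp; exact hg (Or.inl hgp)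
      · rw [h1, pow_one] at hgp; exact hg (Or.inr (hgp ▸ hp))
    · -- p * q divides n₀ : two-prime case
      right
      have hqn : q ∣ n₀ := hqm.trans ⟨p, by rw [hmn]; ring⟩
      have hcop : Nat.Coprime p q := (Nat.coprime_primes hp hq).mpr (Ne.symm hpq)
      have hpqn : p * q ∣ n₀ := hcop.mul_dvd_of_dvd_of_dvd hpn hqn
      have hepq : ∃ h : G, orderOf h = p * q := exo g₀ _ hpqn
      have hcpq : ¬(p * q = 1 ∨ (p * q).Prime) := notOP_mul hp hq (Ne.symm hpq)
      refine ⟨p, q, hp, hq, Ne.symm hpq, fun g hg => ?_⟩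
      have h1 := keyn (orderOf g) (p * q) ⟨g, rfl⟩ hepq hg hcpq
      have hgcd : Nat.gcd (orderOf g) (p * q) = p * q :=
        eq_mul_of_dvd hp hq (Ne.symm hpq) (Nat.gcd_dvd_right _ _) h1
      have hpqg : p * q ∣ orderOf g := hgcd ▸ Nat.gcd_dvd_left _ _
      have hpg : p ∣ orderOf g := (dvd_mul_right p q).trans hpqg
      have hqg : q ∣ orderOf g := (dvd_mul_left q p).trans hpqg
      have hg0 : orderOf g ≠ 0 := (orderOf_pos g).ne'
      -- p ^ 2 does not divide orderOf g
      have hnp2 : ¬ p ^ 2 ∣ orderOf g := by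
        intro hp2
        have hep2 : ∃ h : G, orderOf h = p ^ 2 := exo g _ hp2
        have h2 := keyn (p ^ 2) (p * q) hep2 hepq (notOP_of_sq_dvd hp dvd_rfl) hcpq
        have : Nat.gcd (p ^ 2) (p * q) = p := by
          rw [pow_two, Nat.gcd_mul_left, hcop, mul_one]
        rw [this] at h2
        exact h2 (Or.inr hp)
      have hnq2 : ¬ q ^ 2 ∣ orderOf g := by
        intro hq2
        have heq2 : ∃ h : G, orderOf h = q ^ 2 := exo g _ hq2
        have h2 := keyn (q ^ 2) (p * q) heq2 hepq (notOP_of_sq_dvd hq dvd_rfl) hcpq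
        have : Nat.gcd (q ^ 2) (p * q) = q := by
          rw [pow_two, mul_comm p q, Nat.gcd_mul_left,
            (Nat.coprime_primes hq hp).mpr hpq, mul_one]
        rw [this] at h2
        exact h2 (Or.inr hq)
      have hprimes : ∀ {r : ℕ}, r.Prime → r ∣ orderOf g → r = p ∨ r = q := by
        intro r hrp hrg
        by_contra hrn
        push_neg at hrn
        obtain ⟨hrnp, hrnq⟩ := hrn
        have hcopr : Nat.Coprime p r := (Nat.coprime_primes hp hrp).mpr (Ne.symm hrnp)
        have hprg : p * r ∣ orderOf g := hcopr.mul_dvd_of_dvd_of_dvd hpg hrg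
        have hepr : ∃ h : G, orderOf h = p * r := exo g _ hprg
        have h2 := keyn (p * r) (p * q) hepr hepq (notOP_mul hp hrp (Ne.symm hrnp)) hcpq
        have : Nat.gcd (p * r) (p * q) = p := by
          rw [Nat.gcd_mul_left, (Nat.coprime_primes hrp hq).mpr hrnq, mul_one]
        rw [this] at h2
        exact h2 (Or.inr hp)
      -- conclude orderOf g = p * q
      obtain ⟨t, ht⟩ := hpqg
      have ht0 : t ≠ 0 := by
        intro h0; rw [h0, mul_zero] at ht; exact hg0 ht
      have ht1 : t = 1 := by
        by_contra ht1
        have hs : t.minFac.Prime := Nat.minFac_prime ht1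
        have hst : t.minFac ∣ t := Nat.minFac_dvd t
        have hsg : t.minFac ∣ orderOf g := ht ▸ hst.mul_left _
        rcases hprimes hs hsg with hsp | hsq
        · apply hnp2
          rw [ht, pow_two]
          obtain ⟨u, hu⟩ := hsp ▸ hst
          exact ⟨q * u, by rw [hu]; ring⟩
        · apply hnq2
          rw [ht, pow_two]
          obtain ⟨u, hu⟩ := hsq ▸ hst
          exact ⟨p * u, by rw [hu]; ring⟩
      rw [ht, ht1, mul_one]
  · rintro (h | ⟨p, hp, h⟩ | ⟨p, q, hp, hq, hne, h⟩)
    · apply isSplit_aux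
      intro a ha
      exact absurd (h a) ha
    · apply isSplit_aux
      intro a ha b hb hne2 hadj
      obtain ⟨k, hk, hak⟩ := h a ha
      obtain ⟨l, hl, hbl⟩ := h b hb
      have hdvd : p ^ 2 ∣ Nat.gcd (orderOf a) (orderOf b) :=
        Nat.dvd_gcd (hak ▸ pow_dvd_pow p hk) (hbl ▸ pow_dvd_pow p hl)
      exact notOP_of_sq_dvd hp hdvd hadj.2
    · apply isSplit_aux
      intro a ha b hb hne2 hadj
      have hae := h a ha
      have hbe := h b hb
      have : Nat.gcd (orderOf a) (orderOf b) = p * q := by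
        rw [hae, hbe, Nat.gcd_self]
      exact notOP_mul hp hq hne (this ▸ hadj.2)
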